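/- arXiv:1410.3126 — 4 statements merged into one kernel-verified Lean document; each statement's English description precedes it below -/
import Mathlib

section
/- Let J be a finite symmetric set of pairs (α, β) ∈ ℕ^d × ℕ^d (i.e. (α, β) ∈ J implies (β, α) ∈ J) with rate constants K(α, β) ≥ 0, let M > 0, and suppose ξ ∈ ℝ^d with ξ_i > 0 satisfies the unitarity (Stückelberg–Batishcheva–Pirogov) condition: for every β ∈ ℕ^d, Σ_{α : (α,β)∈J} K(α, β) ξ^α = ξ^β · Σ_{α : (α,β)∈J} K(β, α), where ξ^α = ∏_i ξ_i^{α_i}. Define the intensities λ_{(α,β)}(n) = M^{1 − Σ_i α_i} · K(α, β) · ∏_i n_i (n_i − 1) ⋯ (n_i − α_i + 1) (the descending factorial, equal to 0 if n_i < α_i for some i), and the product-Poisson weight ν(n) = ∏_i (ξ_i M)^{n_i} e^{−ξ_i M} / n_i! for n ∈ ℕ^d, extended by ν(m) = 0 if some coordinate of m is negative. Then ν satisfies the global balance equations: for every n ∈ ℕ^d, Σ_{(α,β)∈J} ν(n − β + α) · λ_{(α,β)}(n − β + α) = ν(n) · Σ_{(α,β)∈J} λ_{(α,β)}(n). (Theorem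 1(b), part 1: the product-Poisson measure is invariant.) -/
open scoped BigOperators

/-- The product-Poisson weight `ν(m) = ∏ᵢ (ξᵢ M)^{mᵢ} e^{-ξᵢ M} / mᵢ!` on `ℤ^d`,
extended by `ν(m) = 0` whenever some coordinate of `m` is negative. -/
noncomputable def poissonWeight (d : ℕ) (ξ : Fin d → ℝ) (M : ℝ) (m : Fin d → ℤ) : ℝ :=
  if ∀ i, 0 ≤ m i then
    ∏ i, (ξ i * M) ^ (m i).toNat * Real.exp (-(ξ i * M)) / Nat.factorial (m i).toNat
  else 0

/-- The reaction intensity `λ_{(α,β)}(m) = M^{1-∑ᵢ αᵢ} K(α,β) ∏ᵢ mᵢ(mᵢ-1)⋯(mᵢ-αᵢ+1)`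
(descending factorial, equal to `0` if `mᵢ < αᵢ` for some `i`). -/
noncomputable def intensity (d : ℕ) (M : ℝ) (Kab : ℝ) (α : Fin d → ℕ)
    (m : Fin d → ℤ) : ℝ :=
  M ^ ((1 : ℤ) - ∑ i, (α i : ℤ)) * Kab * ∏ i, ((m i).toNat.descFactorial (α i) : ℝ)

lemma coord_key (ξi M : ℝ) (hM : 0 < M) (a k : ℕ) :
    (ξi * M) ^ (a + k) * Real.exp (-(ξi * M)) / Nat.factorial (a + k) *
      ((a + k).descFactorial k : ℝ)
      = (ξi ^ k * M ^ k) *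
        ((ξi * M) ^ a * Real.exp (-(ξi * M)) / Nat.factorial a) := by
  have hfac : Nat.factorial a * (a + k).descFactorial k = Nat.factorial (a + k) := by
    have := Nat.factorial_mul_descFactorial (n := a + k) (k := k) (Nat.le_add_left k a)
    simpa using this
  have hfac' : (Nat.factorial a : ℝ) * ((a + k).descFactorial k : ℝ)
      = (Nat.factorial (a + k) : ℝ) := by exact_mod_cast congrArg (Nat.cast : ℕ → ℝ) hfac
  have h1 : (Nat.factorial a : ℝ) ≠ 0 := Nat.cast_ne_zero.2 (Nat.factorial_ne_zero a)
  have h2 : (Nat.factorial (a + k) : ℝ) ≠ 0 := Nat.cast_ne_zero.2 (Nat.factorial_ne_zero _)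
  have hd : ((a + k).descFactorial k : ℝ) = (Nat.factorial (a + k) : ℝ) / Nat.factorial a := by
    field_simp [← hfac']
    linarith [hfac']
  rw [hd, pow_add]
  field_simp
  ring

lemma key_lemma (d : ℕ) (M : ℝ) (hM : 0 < M) (ξ : Fin d → ℝ)
    (Kab : ℝ) (α : Fin d → ℕ) (m : Fin d → ℤ) :
    poissonWeight d ξ M (fun i => m i + (α i : ℤ)) *
      intensity d M Kab α (fun i => m i + (α i : ℤ))
      = M * Kab * (∏ i, ξ i ^ α i) * poissonWeight d ξ M m := by
  by_cases h1 : ∀ i, 0 ≤ m i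
  · have h2 : ∀ i, (0:ℤ) ≤ m i + (α i : ℤ) := fun i =>
      add_nonneg (h1 i) (Int.natCast_nonneg _)
    have htn : ∀ i, (m i + (α i : ℤ)).toNat = (m i).toNat + α i := fun i => by
      have := h1 i; omega
    rw [poissonWeight, poissonWeight, if_pos h2, if_pos h1, intensity]
    simp only [htn]
    have hprod : (∏ i, (ξ i * M) ^ ((m i).toNat + α i) * Real.exp (-(ξ i * M)) /
          Nat.factorial ((m i).toNat + α i)) *
        ∏ i, (((m i).toNat + α i).descFactorial (α i) : ℝ)
        = ∏ i, ((ξ i ^ α i * M ^ α i) *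
          ((ξ i * M) ^ (m i).toNat * Real.exp (-(ξ i * M)) / Nat.factorial (m i).toNat)) := by
      rw [← Finset.prod_mul_distrib]
      exact Finset.prod_congr rfl fun i _ => coord_key (ξ i) M hM _ _
    have hMz : (M : ℝ) ≠ 0 := ne_of_gt hM
    have hpow : M ^ ((1 : ℤ) - ∑ i, (α i : ℤ)) * M ^ (∑ i, α i : ℕ) = M := by
      rw [← zpow_natCast M (∑ i, α i), ← zpow_add₀ hMz]
      simp
    rw [Finset.prod_mul_distrib, Finset.prod_mul_distrib] at hprod
    calc (∏ i, (ξ i * M) ^ ((m i).toNat + α i) * Real.exp (-(ξ i * M)) /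
          Nat.factorial ((m i).toNat + α i)) *
        (M ^ ((1 : ℤ) - ∑ i, (α i : ℤ)) * Kab *
          ∏ i, (((m i).toNat + α i).descFactorial (α i) : ℝ))
        = M ^ ((1 : ℤ) - ∑ i, (α i : ℤ)) * Kab *
            ((∏ i, (ξ i * M) ^ ((m i).toNat + α i) * Real.exp (-(ξ i * M)) /
              Nat.factorial ((m i).toNat + α i)) *
            ∏ i, (((m i).toNat + α i).descFactorial (α i) : ℝ)) := by ring
      _ = M ^ ((1 : ℤ) - ∑ i, (α i : ℤ)) * Kab *
            ((∏ i, ξ i ^ α i) * (∏ i, M ^ α i) *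
              ∏ i, (ξ i * M) ^ (m i).toNat * Real.exp (-(ξ i * M)) /
                Nat.factorial (m i).toNat) := by rw [hprod]
      _ = M * Kab * (∏ i, ξ i ^ α i) *
            ∏ i, (ξ i * M) ^ (m i).toNat * Real.exp (-(ξ i * M)) /
              Nat.factorial (m i).toNat := by
            rw [Finset.prod_pow_eq_pow_sum]
            have halg : M ^ ((1 : ℤ) - ∑ i, (α i : ℤ)) * Kab *
                ((∏ i, ξ i ^ α i) * M ^ (∑ i, α i : ℕ) *
                  ∏ i, (ξ i * M) ^ (m i).toNat * Real.exp (-(ξ i * M)) /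
                    Nat.factorial (m i).toNat)
                = (M ^ ((1 : ℤ) - ∑ i, (α i : ℤ)) * M ^ (∑ i, α i : ℕ)) * Kab *
                  (∏ i, ξ i ^ α i) *
                  ∏ i, (ξ i * M) ^ (m i).toNat * Real.exp (-(ξ i * M)) /
                    Nat.factorial (m i).toNat := by ring
            rw [halg, hpow]
  · push_neg at h1
    obtain ⟨j, hj⟩ := h1
    have hν : poissonWeight d ξ M m = 0 := by
      rw [poissonWeight, if_neg]; push_neg; exact ⟨j, hj⟩
    rw [hν, mul_zero]
    by_cases h2 : ∀ i, (0:ℤ) ≤ m i + (α i : ℤ)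
    · have : ((m j + (α j : ℤ)).toNat.descFactorial (α j) : ℝ) = 0 := by
        rw [Nat.cast_eq_zero, Nat.descFactorial_eq_zero_iff_lt]
        have := h2 j; omega
      rw [intensity, Finset.prod_eq_zero (Finset.mem_univ j) this]
      ring
    · rw [poissonWeight, if_neg h2]; ring

lemma key_lemma' (d : ℕ) (M : ℝ) (hM : 0 < M) (ξ : Fin d → ℝ)
    (Kab : ℝ) (α : Fin d → ℕ) (n : Fin d → ℕ) :
    poissonWeight d ξ M (fun i => (n i : ℤ)) * intensity d M Kab α (fun i => (n i : ℤ))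
      = M * Kab * (∏ i, ξ i ^ α i) *
        poissonWeight d ξ M (fun i => (n i : ℤ) - (α i : ℤ)) := by
  have h := key_lemma d M hM ξ Kab α (fun i => (n i : ℤ) - (α i : ℤ))
  simpa using h

/-- **Theorem 1(b), part 1.** Under the unitarity (Stückelberg–Batishcheva–Pirogov)
condition, the product-Poisson measure with parameters `λᵢ = ξᵢ M` satisfies the global
balance equations, i.e. it is invariant for the stochastic chemical-kinetics dynamics. -/
theorem product_poisson_invariant_of_unitarity (d : ℕ)
    (J : Finset ((Fin d → ℕ) × (Fin d → ℕ)))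
    (hJsymm : ∀ p ∈ J, (p.2, p.1) ∈ J)
    (K : (Fin d → ℕ) × (Fin d → ℕ) → ℝ) (hK : ∀ p ∈ J, 0 ≤ K p)
    (M : ℝ) (hM : 0 < M)
    (ξ : Fin d → ℝ) (hξ : ∀ i, 0 < ξ i)
    (hSBP : ∀ β : Fin d → ℕ,
      ∑ p ∈ J.filter (fun p => p.2 = β), K p * ∏ i, ξ i ^ p.1 i =
        (∏ i, ξ i ^ β i) * ∑ p ∈ J.filter (fun p => p.2 = β), K (p.2, p.1)) :
    ∀ n : Fin d → ℕ,
      ∑ p ∈ J, poissonWeight d ξ M (fun i => (n i : ℤ) - (p.2 i : ℤ) + (p.1 i : ℤ)) *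
          intensity d M (K p) p.1 (fun i => (n i : ℤ) - (p.2 i : ℤ) + (p.1 i : ℤ)) =
        poissonWeight d ξ M (fun i => (n i : ℤ)) *
          ∑ p ∈ J, intensity d M (K p) p.1 (fun i => (n i : ℤ)) := by
  intro n
  set f : (Fin d → ℕ) → ℝ :=
    fun β => poissonWeight d ξ M (fun i => (n i : ℤ) - (β i : ℤ)) with hf
  have maps : ∀ p ∈ J, p.2 ∈ J.image Prod.snd := fun p hp =>
    Finset.mem_image_of_mem _ hp
  calc
    ∑ p ∈ J, poissonWeight d ξ M (fun i => (n i : ℤ) - (p.2 i : ℤ) + (p.1 i : ℤ)) *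
        intensity d M (K p) p.1 (fun i => (n i : ℤ) - (p.2 i : ℤ) + (p.1 i : ℤ))
      = ∑ p ∈ J, M * K p * (∏ i, ξ i ^ p.1 i) * f p.2 := by
        refine Finset.sum_congr rfl fun p _ => ?_
        exact key_lemma d M hM ξ (K p) p.1 (fun i => (n i : ℤ) - (p.2 i : ℤ))
    _ = ∑ p ∈ J, M * K (p.2, p.1) * (∏ i, ξ i ^ p.2 i) * f p.2 := by
        rw [← Finset.sum_fiberwise_of_maps_to maps
            (fun p => M * K p * (∏ i, ξ i ^ p.1 i) * f p.2),
          ← Finset.sum_fiberwise_of_maps_to maps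
            (fun p => M * K (p.2, p.1) * (∏ i, ξ i ^ p.2 i) * f p.2)]
        refine Finset.sum_congr rfl fun β _ => ?_
        have hin : ∀ p ∈ J.filter (fun p => p.2 = β), p.2 = β :=
          fun p hp => (Finset.mem_filter.mp hp).2
        calc
          ∑ p ∈ J.filter (fun p => p.2 = β), M * K p * (∏ i, ξ i ^ p.1 i) * f p.2
            = ∑ p ∈ J.filter (fun p => p.2 = β),
                (M * f β) * (K p * ∏ i, ξ i ^ p.1 i) := by
              refine Finset.sum_congr rfl fun p hp => ?_
              rw [hin p hp]; ring
          _ = (M * f β) * ∑ p ∈ J.filter (fun p => p.2 = β),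
                K p * ∏ i, ξ i ^ p.1 i := (Finset.mul_sum _ _ _).symm
          _ = (M * f β) * ((∏ i, ξ i ^ β i) *
                ∑ p ∈ J.filter (fun p => p.2 = β), K (p.2, p.1)) := by rw [hSBP β]
          _ = ∑ p ∈ J.filter (fun p => p.2 = β),
                (M * f β) * ((∏ i, ξ i ^ β i) * K (p.2, p.1)) := by
              rw [Finset.mul_sum, Finset.mul_sum]
          _ = ∑ p ∈ J.filter (fun p => p.2 = β),
                M * K (p.2, p.1) * (∏ i, ξ i ^ p.2 i) * f p.2 := by
              refine Finset.sum_congr rfl fun p hp => ?_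
              rw [hin p hp]; ring
    _ = ∑ p ∈ J, M * K p * (∏ i, ξ i ^ p.1 i) * f p.1 :=
        Finset.sum_nbij' (fun p => (p.2, p.1)) (fun p => (p.2, p.1))
          (fun p hp => hJsymm p hp) (fun p hp => hJsymm p hp)
          (fun p _ => rfl) (fun p _ => rfl) (fun p _ => rfl)
    _ = ∑ p ∈ J, poissonWeight d ξ M (fun i => (n i : ℤ)) *
          intensity d M (K p) p.1 (fun i => (n i : ℤ)) := by
        refine Finset.sum_congr rfl fun p _ => ?_
        exact (key_lemma' d M hM ξ (K p) p.1 n).symm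
    _ = poissonWeight d ξ M (fun i => (n i : ℤ)) *
          ∑ p ∈ J, intensity d M (K p) p.1 (fun i => (n i : ℤ)) :=
        (Finset.mul_sum _ _ _).symm
end

section
/- Let J be a finite symmetric set of pairs (α, β) ∈ ℕ^d × ℕ^d with rate constants K(α, β) ≥ 0, let M > 0, and suppose ξ ∈ ℝ^d with ξ_i > 0 satisfies the detailed balance condition K(α, β) ξ^α = K(β, α) ξ^β for all (α, β) ∈ J. Define λ_{(α,β)}(n) = M^{1 − Σ_i α_i} K(α, β) ∏_i n_i(n_i−1)⋯(n_i−α_i+1) (descending factorial, 0 if n_i < α_i) and ν(n) = ∏_i (ξ_i M)^{n_i} e^{−ξ_i M} / n_i! for n ∈ ℕ^d. Then the Markov chain is reversible with respect to ν: for every n ∈ ℕ^d with n_i ≥ α_i for all i and every (α, β) ∈ J, ν(n) · λ_{(α,β)}(n) = ν(n − α + β) · λ_{(β,α)}(n − α + β). -/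
open scoped BigOperators


lemma poisson_desc_aux (x e : ℝ) (n a : ℕ) (h : a ≤ n) :
    x ^ n * e / (Nat.factorial n : ℝ) * ((n).descFactorial a : ℝ) =
      (x ^ (n - a) * e / (Nat.factorial (n - a) : ℝ)) * x ^ a := by
  have hfac : ((Nat.factorial (n - a)) : ℝ) * ((n).descFactorial a : ℝ)
      = ((Nat.factorial n) : ℝ) := by
    exact_mod_cast Nat.factorial_mul_descFactorial h
  have hx : x ^ n = x ^ (n - a) * x ^ a := by
    rw [← pow_add]; congr 1; omega
  have h1 : ((Nat.factorial n) : ℝ) ≠ 0 := by positivity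
  have h2 : ((Nat.factorial (n - a)) : ℝ) ≠ 0 := by positivity
  field_simp
  rw [hx]
  linear_combination (x ^ (n - a) * x ^ a * e) * hfac


/-- The product-Poisson weight `ν(n) = ∏ᵢ (ξᵢ M)^{nᵢ} e^{-ξᵢ M} / nᵢ!` on `ℕ^d`. -/
noncomputable def poissonWeightNat (d : ℕ) (ξ : Fin d → ℝ) (M : ℝ) (n : Fin d → ℕ) : ℝ :=
  ∏ i, (ξ i * M) ^ n i * Real.exp (-(ξ i * M)) / Nat.factorial (n i)

/-- The reaction intensity `λ_{(α,β)}(n) = M^{1-∑ᵢ αᵢ} K(α,β) ∏ᵢ nᵢ(nᵢ-1)⋯(nᵢ-αᵢ+1)`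
(descending factorial, equal to `0` if `nᵢ < αᵢ` for some `i`). -/
noncomputable def intensityNat (d : ℕ) (M : ℝ) (Kab : ℝ) (α : Fin d → ℕ)
    (n : Fin d → ℕ) : ℝ :=
  M ^ ((1 : ℤ) - ∑ i, (α i : ℤ)) * Kab * ∏ i, ((n i).descFactorial (α i) : ℝ)

/-- If `ξ > 0` satisfies the detailed balance condition `K(α,β) ξ^α = K(β,α) ξ^β` for all
`(α,β) ∈ J`, then the stochastic chemical-kinetics Markov chain is reversible with respect
to the product-Poisson weight `ν`: `ν(n) λ_{(α,β)}(n) = ν(n-α+β) λ_{(β,α)}(n-α+β)`. -/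
theorem reversibility_of_detailed_balance (d : ℕ)
    (J : Finset ((Fin d → ℕ) × (Fin d → ℕ)))
    (hJsymm : ∀ p ∈ J, (p.2, p.1) ∈ J)
    (K : (Fin d → ℕ) × (Fin d → ℕ) → ℝ) (hK : ∀ p ∈ J, 0 ≤ K p)
    (M : ℝ) (hM : 0 < M)
    (ξ : Fin d → ℝ) (hξ : ∀ i, 0 < ξ i)
    (hDB : ∀ p ∈ J, K p * ∏ i, ξ i ^ p.1 i = K (p.2, p.1) * ∏ i, ξ i ^ p.2 i) :
    ∀ n : Fin d → ℕ, ∀ p ∈ J, (∀ i, p.1 i ≤ n i) →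
      poissonWeightNat d ξ M n * intensityNat d M (K p) p.1 n =
        poissonWeightNat d ξ M (fun i => n i - p.1 i + p.2 i) *
          intensityNat d M (K (p.2, p.1)) p.2 (fun i => n i - p.1 i + p.2 i) := by
  intro n p hp hle
  obtain ⟨α, β⟩ := p
  simp only at hle hDB ⊢
  set m : Fin d → ℕ := fun i => n i - α i + β i with hm
  -- base product
  set B : Fin d → ℝ :=
    fun i => (ξ i * M) ^ (n i - α i) * Real.exp (-(ξ i * M)) /
      (Nat.factorial (n i - α i) : ℝ) with hB
  have hMne : M ≠ 0 := ne_of_gt hM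
  have key1 : ∀ i, ((ξ i * M) ^ n i * Real.exp (-(ξ i * M)) / (Nat.factorial (n i) : ℝ)) *
      ((n i).descFactorial (α i) : ℝ) = B i * (ξ i * M) ^ α i := fun i =>
    poisson_desc_aux _ _ _ _ (hle i)
  have key2 : ∀ i, ((ξ i * M) ^ m i * Real.exp (-(ξ i * M)) / (Nat.factorial (m i) : ℝ)) *
      ((m i).descFactorial (β i) : ℝ) = B i * (ξ i * M) ^ β i := by
    intro i
    have h1 : β i ≤ m i := by simp [hm]
    have h2 : m i - β i = n i - α i := by simp [hm]
    rw [poisson_desc_aux _ _ _ _ h1, h2]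
  -- rewrite both sides
  unfold poissonWeightNat intensityNat
  have lhs_eq : (∏ i, (ξ i * M) ^ n i * Real.exp (-(ξ i * M)) / (Nat.factorial (n i) : ℝ)) *
      (M ^ ((1 : ℤ) - ∑ i, (α i : ℤ)) * K (α, β) * ∏ i, ((n i).descFactorial (α i) : ℝ)) =
      (M ^ ((1 : ℤ) - ∑ i, (α i : ℤ)) * K (α, β) * ∏ i, (ξ i * M) ^ α i) * ∏ i, B i := by
    have hp1 : (∏ i, (ξ i * M) ^ n i * Real.exp (-(ξ i * M)) / (Nat.factorial (n i) : ℝ)) *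
        (∏ i, ((n i).descFactorial (α i) : ℝ)) = ∏ i, (B i * (ξ i * M) ^ α i) := by
      rw [← Finset.prod_mul_distrib]
      exact Finset.prod_congr rfl fun i _ => key1 i
    calc (∏ i, (ξ i * M) ^ n i * Real.exp (-(ξ i * M)) / (Nat.factorial (n i) : ℝ)) *
        (M ^ ((1 : ℤ) - ∑ i, (α i : ℤ)) * K (α, β) * ∏ i, ((n i).descFactorial (α i) : ℝ))
        = M ^ ((1 : ℤ) - ∑ i, (α i : ℤ)) * K (α, β) *
          ((∏ i, (ξ i * M) ^ n i * Real.exp (-(ξ i * M)) / (Nat.factorial (n i) : ℝ)) *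
           ∏ i, ((n i).descFactorial (α i) : ℝ)) := by ring
      _ = M ^ ((1 : ℤ) - ∑ i, (α i : ℤ)) * K (α, β) * ∏ i, (B i * (ξ i * M) ^ α i) := by
          rw [hp1]
      _ = _ := by rw [Finset.prod_mul_distrib]; ring
  have rhs_eq : (∏ i, (ξ i * M) ^ m i * Real.exp (-(ξ i * M)) / (Nat.factorial (m i) : ℝ)) *
      (M ^ ((1 : ℤ) - ∑ i, (β i : ℤ)) * K (β, α) * ∏ i, ((m i).descFactorial (β i) : ℝ)) =
      (M ^ ((1 : ℤ) - ∑ i, (β i : ℤ)) * K (β, α) * ∏ i, (ξ i * M) ^ β i) * ∏ i, B i := by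
    have hp2 : (∏ i, (ξ i * M) ^ m i * Real.exp (-(ξ i * M)) / (Nat.factorial (m i) : ℝ)) *
        (∏ i, ((m i).descFactorial (β i) : ℝ)) = ∏ i, (B i * (ξ i * M) ^ β i) := by
      rw [← Finset.prod_mul_distrib]
      exact Finset.prod_congr rfl fun i _ => key2 i
    calc (∏ i, (ξ i * M) ^ m i * Real.exp (-(ξ i * M)) / (Nat.factorial (m i) : ℝ)) *
        (M ^ ((1 : ℤ) - ∑ i, (β i : ℤ)) * K (β, α) * ∏ i, ((m i).descFactorial (β i) : ℝ))
        = M ^ ((1 : ℤ) - ∑ i, (β i : ℤ)) * K (β, α) *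
          ((∏ i, (ξ i * M) ^ m i * Real.exp (-(ξ i * M)) / (Nat.factorial (m i) : ℝ)) *
           ∏ i, ((m i).descFactorial (β i) : ℝ)) := by ring
      _ = M ^ ((1 : ℤ) - ∑ i, (β i : ℤ)) * K (β, α) * ∏ i, (B i * (ξ i * M) ^ β i) := by
          rw [hp2]
      _ = _ := by rw [Finset.prod_mul_distrib]; ring
  rw [lhs_eq, rhs_eq]
  congr 1
  -- scalar identity
  have hprod : ∀ γ : Fin d → ℕ,
      M ^ ((1 : ℤ) - ∑ i, (γ i : ℤ)) * (∏ i, (ξ i * M) ^ γ i) =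
        M * ∏ i, ξ i ^ γ i := by
    intro γ
    have : ∏ i, (ξ i * M) ^ γ i = (∏ i, ξ i ^ γ i) * M ^ (∑ i, γ i) := by
      simp [mul_pow, Finset.prod_mul_distrib, Finset.prod_pow_eq_pow_sum]
    rw [this]
    have hz : M ^ (∑ i, γ i) = M ^ ((∑ i, (γ i : ℤ))) := by
      rw [← Nat.cast_sum, zpow_natCast]
    have hM1 : M ^ ((1 : ℤ) - ∑ i, (γ i : ℤ)) * M ^ ((∑ i, (γ i : ℤ))) = M := by
      rw [← zpow_add₀ hMne]; norm_num
    rw [hz]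
    calc M ^ ((1 : ℤ) - ∑ i, (γ i : ℤ)) * ((∏ i, ξ i ^ γ i) * M ^ ((∑ i, (γ i : ℤ))))
        = (M ^ ((1 : ℤ) - ∑ i, (γ i : ℤ)) * M ^ ((∑ i, (γ i : ℤ)))) * ∏ i, ξ i ^ γ i := by
          ring
      _ = M * ∏ i, ξ i ^ γ i := by rw [hM1]
  have h1 := hprod α
  have h2 := hprod β
  have hdb := hDB (α, β) hp
  simp only at hdb
  calc M ^ ((1 : ℤ) - ∑ i, (α i : ℤ)) * K (α, β) * ∏ i, (ξ i * M) ^ α i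
      = K (α, β) * (M ^ ((1 : ℤ) - ∑ i, (α i : ℤ)) * ∏ i, (ξ i * M) ^ α i) := by ring
    _ = K (α, β) * (M * ∏ i, ξ i ^ α i) := by rw [h1]
    _ = M * (K (α, β) * ∏ i, ξ i ^ α i) := by ring
    _ = M * (K (β, α) * ∏ i, ξ i ^ β i) := by rw [hdb]
    _ = K (β, α) * (M * ∏ i, ξ i ^ β i) := by ring
    _ = K (β, α) * (M ^ ((1 : ℤ) - ∑ i, (β i : ℤ)) * ∏ i, (ξ i * M) ^ β i) := by rw [h2]
    _ = M ^ ((1 : ℤ) - ∑ i, (β i : ℤ)) * K (β, α) * ∏ i, (ξ i * M) ^ β i := by ring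
end

section
/- Let J be a finite symmetric set of pairs (α, β) ∈ ℕ^d × ℕ^d with rate constants K(α, β) ≥ 0, and suppose ξ ∈ ℝ^d with ξ_i > 0 satisfies the unitarity (Stückelberg–Batishcheva–Pirogov) condition: for every β ∈ ℕ^d, Σ_{α : (α,β)∈J} K(α, β) ξ^α = ξ^β · Σ_{α : (α,β)∈J} K(β, α). Then for every differentiable curve c : ℝ → ℝ^d with c_i(t) > 0 solving the quasi-mean dynamics c_i'(t) = Σ_{(α,β)∈J} (β_i − α_i) K(α, β) ∏_j c_j(t)^{α_j}, the entropy-like function t ↦ Σ_i c_i(t) · ( ln( c_i(t)/ξ_i ) − 1 ) is nonincreasing; i.e. H(c) = Σ_i c_i (ln(c_i/ξ_i) − 1) is a Lyapunov function for the quasi-mean dynamics. (Batishcheva–Vedenyapin theorem.) -/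
open scoped BigOperators

private lemma bv_key (d : ℕ)
    (J : Finset ((Fin d → ℕ) × (Fin d → ℕ)))
    (hJsymm : ∀ p ∈ J, (p.2, p.1) ∈ J)
    (K : (Fin d → ℕ) × (Fin d → ℕ) → ℝ) (hK : ∀ p ∈ J, 0 ≤ K p)
    (ξ : Fin d → ℝ) (hξ : ∀ i, 0 < ξ i)
    (hSBP : ∀ β : Fin d → ℕ,
      ∑ p ∈ J.filter (fun p => p.2 = β), K p * ∏ i, ξ i ^ p.1 i =
        (∏ i, ξ i ^ β i) * ∑ p ∈ J.filter (fun p => p.2 = β), K (p.2, p.1))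
    (a : Fin d → ℝ) (ha : ∀ i, 0 < a i) :
    ∑ i, Real.log (a i / ξ i) *
      (∑ p ∈ J, ((p.2 i : ℝ) - (p.1 i : ℝ)) * K p * ∏ j, a j ^ p.1 j) ≤ 0 := by
  classical
  set r : Fin d → ℝ := fun i => a i / ξ i with hr
  have hrpos : ∀ i, 0 < r i := fun i => div_pos (ha i) (hξ i)
  set u : (Fin d → ℕ) → ℝ := fun α => ∏ i, r i ^ α i with hu
  have hupos : ∀ α, 0 < u α := fun α => Finset.prod_pos fun i _ => pow_pos (hrpos i) _
  set Ξ : (Fin d → ℕ) → ℝ := fun α => ∏ i, ξ i ^ α i with hΞ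
  have hΞpos : ∀ α, 0 < Ξ α := fun α => Finset.prod_pos fun i _ => pow_pos (hξ i) _
  have hA : ∀ α : Fin d → ℕ, (∏ j, a j ^ α j) = Ξ α * u α := by
    intro α
    simp only [hΞ, hu, ← Finset.prod_mul_distrib]
    refine Finset.prod_congr rfl fun i _ => ?_
    rw [hr, div_pow, mul_div_cancel₀ _ (pow_ne_zero _ (hξ i).ne')]
  have hlog : ∀ α : Fin d → ℕ, ∑ i, (α i : ℝ) * Real.log (r i) = Real.log (u α) := by
    intro α
    rw [hu, Real.log_prod (fun i _ => (pow_pos (hrpos i) _).ne')]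
    simp [Real.log_pow]
  -- swap the sums
  have hswap : ∑ i, Real.log (a i / ξ i) *
      (∑ p ∈ J, ((p.2 i : ℝ) - (p.1 i : ℝ)) * K p * ∏ j, a j ^ p.1 j) =
      ∑ p ∈ J, K p * (Ξ p.1 * u p.1) * (Real.log (u p.2) - Real.log (u p.1)) := by
    calc ∑ i, Real.log (a i / ξ i) *
          (∑ p ∈ J, ((p.2 i : ℝ) - (p.1 i : ℝ)) * K p * ∏ j, a j ^ p.1 j)
        = ∑ i, ∑ p ∈ J,
            (K p * ∏ j, a j ^ p.1 j) * (((p.2 i : ℝ) - (p.1 i : ℝ)) * Real.log (r i)) := by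
          refine Finset.sum_congr rfl fun i _ => ?_
          rw [Finset.mul_sum]
          exact Finset.sum_congr rfl fun p _ => by rw [hr]; ring
      _ = ∑ p ∈ J, ∑ i,
            (K p * ∏ j, a j ^ p.1 j) * (((p.2 i : ℝ) - (p.1 i : ℝ)) * Real.log (r i)) :=
          Finset.sum_comm
      _ = ∑ p ∈ J, K p * (Ξ p.1 * u p.1) * (Real.log (u p.2) - Real.log (u p.1)) := by
          refine Finset.sum_congr rfl fun p _ => ?_
          rw [← Finset.mul_sum, hA p.1]
          congr 1
          rw [← hlog p.1, ← hlog p.2, ← Finset.sum_sub_distrib]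
          exact Finset.sum_congr rfl fun i _ => by ring
  rw [hswap]
  -- termwise bound via log x ≤ x - 1
  have hterm : ∀ p ∈ J, K p * (Ξ p.1 * u p.1) * (Real.log (u p.2) - Real.log (u p.1)) ≤
      K p * Ξ p.1 * (u p.2 - u p.1) := by
    intro p hp
    have h1 : u p.1 * (Real.log (u p.2) - Real.log (u p.1)) ≤ u p.2 - u p.1 := by
      have hlt : Real.log (u p.2 / u p.1) ≤ u p.2 / u p.1 - 1 :=
        Real.log_le_sub_one_of_pos (div_pos (hupos p.2) (hupos p.1))
      rw [Real.log_div (hupos p.2).ne' (hupos p.1).ne'] at hlt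
      have := mul_le_mul_of_nonneg_left hlt (hupos p.1).le
      calc u p.1 * (Real.log (u p.2) - Real.log (u p.1))
          ≤ u p.1 * (u p.2 / u p.1 - 1) := this
        _ = u p.2 - u p.1 := by rw [mul_sub, mul_div_cancel₀ _ (hupos p.1).ne', mul_one]
    calc K p * (Ξ p.1 * u p.1) * (Real.log (u p.2) - Real.log (u p.1))
        = (K p * Ξ p.1) * (u p.1 * (Real.log (u p.2) - Real.log (u p.1))) := by ring
      _ ≤ (K p * Ξ p.1) * (u p.2 - u p.1) :=
          mul_le_mul_of_nonneg_left h1 (mul_nonneg (hK p hp) (hΞpos p.1).le)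
  refine le_trans (Finset.sum_le_sum hterm) ?_
  -- the remaining sum vanishes by unitarity + symmetry
  have hzero : ∑ p ∈ J, K p * Ξ p.1 * (u p.2 - u p.1) = 0 := by
    have hsplit : ∑ p ∈ J, K p * Ξ p.1 * (u p.2 - u p.1) =
        (∑ p ∈ J, K p * Ξ p.1 * u p.2) - ∑ p ∈ J, K p * (Ξ p.1 * u p.1) := by
      rw [← Finset.sum_sub_distrib]
      exact Finset.sum_congr rfl fun p _ => by ring
    rw [hsplit, sub_eq_zero]
    have hE2 : ∑ p ∈ J, K p * (Ξ p.1 * u p.1) =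
        ∑ p ∈ J, K (p.2, p.1) * (Ξ p.2 * u p.2) := by
      refine Finset.sum_nbij' (fun p => (p.2, p.1)) (fun p => (p.2, p.1))
        (fun p hp => hJsymm p hp) (fun p hp => hJsymm p hp)
        (fun p _ => rfl) (fun p _ => rfl) (fun p _ => rfl)
    rw [hE2]
    rw [← Finset.sum_fiberwise_of_maps_to (t := J.image Prod.snd)
      (g := Prod.snd) (fun p hp => Finset.mem_image_of_mem _ hp)
      (fun p => K p * Ξ p.1 * u p.2),
      ← Finset.sum_fiberwise_of_maps_to (t := J.image Prod.snd)
      (g := Prod.snd) (fun p hp => Finset.mem_image_of_mem _ hp)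
      (fun p => K (p.2, p.1) * (Ξ p.2 * u p.2))]
    refine Finset.sum_congr rfl fun β _ => ?_
    have h1 : ∑ p ∈ J.filter (fun p => p.2 = β), K p * Ξ p.1 * u p.2 =
        u β * ∑ p ∈ J.filter (fun p => p.2 = β), K p * Ξ p.1 := by
      rw [Finset.mul_sum]
      refine Finset.sum_congr rfl fun p hp => ?_
      have : p.2 = β := (Finset.mem_filter.mp hp).2
      rw [this]; ring
    have h2 : ∑ p ∈ J.filter (fun p => p.2 = β), K (p.2, p.1) * (Ξ p.2 * u p.2) =
        (Ξ β * u β) * ∑ p ∈ J.filter (fun p => p.2 = β), K (p.2, p.1) := by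
      rw [Finset.mul_sum]
      refine Finset.sum_congr rfl fun p hp => ?_
      have : p.2 = β := (Finset.mem_filter.mp hp).2
      rw [this]; ring
    rw [h1, h2, hSBP β]
    ring
  linarith [hzero]

private lemma bv_hasDerivAt (d : ℕ)
    (J : Finset ((Fin d → ℕ) × (Fin d → ℕ)))
    (K : (Fin d → ℕ) × (Fin d → ℕ) → ℝ)
    (ξ : Fin d → ℝ) (hξ : ∀ i, 0 < ξ i)
    (c : ℝ → Fin d → ℝ) (hpos : ∀ t i, 0 < c t i)
    (hderiv : ∀ t : ℝ, ∀ i : Fin d,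
        HasDerivAt (fun s => c s i)
          (∑ p ∈ J, ((p.2 i : ℝ) - (p.1 i : ℝ)) * K p * ∏ j, c t j ^ p.1 j) t) :
    ∀ t : ℝ, HasDerivAt (fun s => ∑ i, c s i * (Real.log (c s i / ξ i) - 1))
      (∑ i, Real.log (c t i / ξ i) *
        (∑ p ∈ J, ((p.2 i : ℝ) - (p.1 i : ℝ)) * K p * ∏ j, c t j ^ p.1 j)) t := by
  intro t
  apply HasDerivAt.fun_sum
  intro i _
  have hx : c t i ≠ 0 := (hpos t i).ne'
  have h1 : HasDerivAt (fun x : ℝ => x * (Real.log (x / ξ i) - 1))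
      (Real.log (c t i / ξ i)) (c t i) := by
    have hlog : HasDerivAt (fun x : ℝ => Real.log (x / ξ i) - 1)
        ((1 / ξ i) / (c t i / ξ i)) (c t i) :=
      (((hasDerivAt_id (c t i)).div_const (ξ i)).log
        (div_ne_zero hx (hξ i).ne')).sub_const 1
    have := (hasDerivAt_id (c t i)).fun_mul hlog
    refine this.congr_deriv ?_
    simp only [id]
    have hone : c t i * (1 / ξ i / (c t i / ξ i)) = 1 := by
      field_simp
      exact div_self (hξ i).ne'
    rw [one_mul, hone]
    ring
  exact h1.comp t (hderiv t i)

/-- **Batishcheva–Vedenyapin theorem.** If `ξ > 0` satisfies the unitarity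
(Stückelberg–Batishcheva–Pirogov) condition, then the entropy-like functional
`H(c) = ∑ᵢ cᵢ (ln(cᵢ/ξᵢ) - 1)` is nonincreasing along every positive solution of the
quasi-mean dynamics, i.e. `H` is a Lyapunov function for the quasi-mean dynamics. -/
theorem entropy_lyapunov_of_unitarity (d : ℕ)
    (J : Finset ((Fin d → ℕ) × (Fin d → ℕ)))
    (hJsymm : ∀ p ∈ J, (p.2, p.1) ∈ J)
    (K : (Fin d → ℕ) × (Fin d → ℕ) → ℝ) (hK : ∀ p ∈ J, 0 ≤ K p)
    (ξ : Fin d → ℝ) (hξ : ∀ i, 0 < ξ i)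
    (hSBP : ∀ β : Fin d → ℕ,
      ∑ p ∈ J.filter (fun p => p.2 = β), K p * ∏ i, ξ i ^ p.1 i =
        (∏ i, ξ i ^ β i) * ∑ p ∈ J.filter (fun p => p.2 = β), K (p.2, p.1)) :
    ∀ c : ℝ → Fin d → ℝ, (∀ t i, 0 < c t i) →
      (∀ t : ℝ, ∀ i : Fin d,
        HasDerivAt (fun s => c s i)
          (∑ p ∈ J, ((p.2 i : ℝ) - (p.1 i : ℝ)) * K p * ∏ j, c t j ^ p.1 j) t) →
      ∀ s t : ℝ, s ≤ t →
        ∑ i, c t i * (Real.log (c t i / ξ i) - 1) ≤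
          ∑ i, c s i * (Real.log (c s i / ξ i) - 1) := by
  intro c hpos hderiv s t hst
  set H : ℝ → ℝ := fun s => ∑ i, c s i * (Real.log (c s i / ξ i) - 1) with hH
  have hHd := bv_hasDerivAt d J K ξ hξ c hpos hderiv
  have hdiff : Differentiable ℝ H := fun x => (hHd x).differentiableAt
  have hnonpos : ∀ x : ℝ, deriv H x ≤ 0 := by
    intro x
    rw [(hHd x).deriv]
    exact bv_key d J hJsymm K hK ξ hξ hSBP (c x) (hpos x)
  exact antitone_of_deriv_nonpos hdiff hnonpos hst
end

section
/- Let J be a finite symmetric set of pairs (α, β) ∈ ℕ^d × ℕ^d with rate constants K(α, β) ≥ 0 and let ξ ∈ ℝ^d with ξ_i > 0. Then the following identity holds for all s ∈ ℝ^d with s_i > 0 — Σ_{(α,β)∈J} ( s^β − s^α ) · K(α, β) · ξ^α = 0 — if and only if ξ satisfies the unitarity (Stückelberg–Batishcheva–Pirogov) condition: for every β ∈ ℕ^d, Σ_{α : (α,β)∈J} K(α, β) ξ^α = ξ^β · Σ_{α : (α,β)∈J} K(β, α). (The computation underlying Corollary 2: for the entropy H(c) = Σ_i c_i (ln(c_i/ξ_i)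 − 1), invariance of the product-Poisson measure forces the unitarity condition.) -/
open scoped BigOperators

private lemma digits_inj : ∀ (d N : ℕ) (a b : Fin d → ℕ), (∀ i, a i < N) → (∀ i, b i < N) →
    (∑ i, a i * N ^ (i : ℕ)) = (∑ i, b i * N ^ (i : ℕ)) → a = b := by
  intro d
  induction d with
  | zero => intro N a b _ _ _; funext i; exact absurd i.2 (by omega)
  | succ d ih =>
    intro N a b ha hb hsum
    have hN : 0 < N := lt_of_le_of_lt (Nat.zero_le _) (ha 0)
    rw [Fin.sum_univ_succ, Fin.sum_univ_succ] at hsum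
    have key : ∀ c : Fin (d+1) → ℕ,
        (∑ i : Fin d, c i.succ * N ^ ((i.succ : Fin (d+1)) : ℕ))
          = N * ∑ i : Fin d, c i.succ * N ^ (i : ℕ) := by
      intro c
      rw [Finset.mul_sum]
      refine Finset.sum_congr rfl fun i _ => ?_
      have h1 : ((i.succ : Fin (d+1)) : ℕ) = (i : ℕ) + 1 := rfl
      rw [h1, pow_succ]; ring
    rw [key a, key b] at hsum
    simp only [Fin.val_zero, pow_zero, mul_one] at hsum
    have h0 : a 0 = b 0 := by
      have := congrArg (· % N) hsum
      simpa [Nat.add_mul_mod_self_left, Nat.mod_eq_of_lt (ha 0), Nat.mod_eq_of_lt (hb 0)]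
        using this
    have htail : (fun i : Fin d => a i.succ) = fun i : Fin d => b i.succ := by
      refine ih N _ _ (fun i => ha i.succ) (fun i => hb i.succ) ?_
      have h2 : N * ∑ i : Fin d, a i.succ * N ^ (i : ℕ)
          = N * ∑ i : Fin d, b i.succ * N ^ (i : ℕ) := by omega
      exact Nat.eq_of_mul_eq_mul_left hN h2
    funext i
    refine Fin.cases h0 (fun j => ?_) i
    exact congrFun htail j

/-- **Computation underlying Corollary 2.** The identity
`∑_{(α,β)∈J} (s^β - s^α) K(α,β) ξ^α = 0` holds for all `s` in the open positive orthant
if and only if `ξ` satisfies the unitarity (Stückelberg–Batishcheva–Pirogov) condition. -/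
theorem invariance_identity_iff_unitarity (d : ℕ)
    (J : Finset ((Fin d → ℕ) × (Fin d → ℕ)))
    (hJsymm : ∀ p ∈ J, (p.2, p.1) ∈ J)
    (K : (Fin d → ℕ) × (Fin d → ℕ) → ℝ) (hK : ∀ p ∈ J, 0 ≤ K p)
    (ξ : Fin d → ℝ) (hξ : ∀ i, 0 < ξ i) :
    (∀ s : Fin d → ℝ, (∀ i, 0 < s i) →
        ∑ p ∈ J, ((∏ i, s i ^ p.2 i) - ∏ i, s i ^ p.1 i) * K p * ∏ i, ξ i ^ p.1 i = 0) ↔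
      (∀ β : Fin d → ℕ,
        ∑ p ∈ J.filter (fun p => p.2 = β), K p * ∏ i, ξ i ^ p.1 i =
          (∏ i, ξ i ^ β i) * ∑ p ∈ J.filter (fun p => p.2 = β), K (p.2, p.1)) := by
  classical
  set S : Finset (Fin d → ℕ) := J.image Prod.snd with hS
  have hmem : ∀ p ∈ J, p.2 ∈ S := fun p hp => Finset.mem_image_of_mem _ hp
  set c : (Fin d → ℕ) → ℝ := fun β =>
    (∑ p ∈ J.filter (fun p => p.2 = β), K p * ∏ i, ξ i ^ p.1 i) -
      (∏ i, ξ i ^ β i) * ∑ p ∈ J.filter (fun p => p.2 = β), K (p.2, p.1) with hc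
  -- regrouping lemma
  have regroup : ∀ s : Fin d → ℝ,
      ∑ p ∈ J, ((∏ i, s i ^ p.2 i) - ∏ i, s i ^ p.1 i) * K p * ∏ i, ξ i ^ p.1 i
        = ∑ β ∈ S, (∏ i, s i ^ β i) * c β := by
    intro s
    have split : ∑ p ∈ J, ((∏ i, s i ^ p.2 i) - ∏ i, s i ^ p.1 i) * K p * ∏ i, ξ i ^ p.1 i
        = (∑ p ∈ J, (∏ i, s i ^ p.2 i) * (K p * ∏ i, ξ i ^ p.1 i))
          - ∑ p ∈ J, (∏ i, s i ^ p.1 i) * (K p * ∏ i, ξ i ^ p.1 i) := by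
      rw [← Finset.sum_sub_distrib]
      exact Finset.sum_congr rfl fun p _ => by ring
    have first : ∑ p ∈ J, (∏ i, s i ^ p.2 i) * (K p * ∏ i, ξ i ^ p.1 i)
        = ∑ β ∈ S, (∏ i, s i ^ β i) *
            ∑ p ∈ J.filter (fun p => p.2 = β), K p * ∏ i, ξ i ^ p.1 i := by
      rw [← Finset.sum_fiberwise_of_maps_to hmem
        (fun p => (∏ i, s i ^ p.2 i) * (K p * ∏ i, ξ i ^ p.1 i))]
      refine Finset.sum_congr rfl fun β _ => ?_
      rw [Finset.mul_sum]
      refine Finset.sum_congr rfl fun p hp => ?_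
      rw [(Finset.mem_filter.mp hp).2]
    have swap : ∑ p ∈ J, (∏ i, s i ^ p.1 i) * (K p * ∏ i, ξ i ^ p.1 i)
        = ∑ p ∈ J, (∏ i, s i ^ p.2 i) * (K (p.2, p.1) * ∏ i, ξ i ^ p.2 i) := by
      refine Finset.sum_nbij' (fun p => (p.2, p.1)) (fun p => (p.2, p.1))
        (fun p hp => hJsymm p hp) (fun p hp => hJsymm p hp)
        (fun p _ => rfl) (fun p _ => rfl) (fun p _ => rfl)
    have second : ∑ p ∈ J, (∏ i, s i ^ p.2 i) * (K (p.2, p.1) * ∏ i, ξ i ^ p.2 i)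
        = ∑ β ∈ S, (∏ i, s i ^ β i) * ((∏ i, ξ i ^ β i) *
            ∑ p ∈ J.filter (fun p => p.2 = β), K (p.2, p.1)) := by
      rw [← Finset.sum_fiberwise_of_maps_to hmem
        (fun p => (∏ i, s i ^ p.2 i) * (K (p.2, p.1) * ∏ i, ξ i ^ p.2 i))]
      refine Finset.sum_congr rfl fun β _ => ?_
      rw [Finset.mul_sum, Finset.mul_sum]
      refine Finset.sum_congr rfl fun p hp => ?_
      rw [(Finset.mem_filter.mp hp).2]
      ring
    rw [split, first, swap, second, ← Finset.sum_sub_distrib]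
    exact Finset.sum_congr rfl fun β _ => by rw [hc]; ring
  constructor
  · intro H β
    by_cases hβ : β ∈ S
    · -- main case
      have hsub : c β = 0 := by
        set N : ℕ := 1 + S.sup (fun γ => Finset.univ.sup γ) with hN
        have hlt : ∀ γ ∈ S, ∀ i, γ i < N := by
          intro γ hγ i
          have h1 : γ i ≤ Finset.univ.sup γ := Finset.le_sup (Finset.mem_univ i)
          have h2 : Finset.univ.sup γ ≤ S.sup (fun γ => Finset.univ.sup γ) :=
            Finset.le_sup hγ
          omega
        set e : (Fin d → ℕ) → ℕ := fun γ => ∑ i, γ i * N ^ (i : ℕ) with he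
        set P : Polynomial ℝ := ∑ γ ∈ S, Polynomial.C (c γ) * Polynomial.X ^ (e γ) with hP
        have hroot : ∀ t : ℝ, 0 < t → P.eval t = 0 := by
          intro t ht
          have hs : ∀ i : Fin d, (0:ℝ) < t ^ (N ^ (i:ℕ)) := fun i => pow_pos ht _
          have hid := H (fun i => t ^ (N ^ (i:ℕ))) hs
          rw [regroup] at hid
          rw [hP]
          simp only [Polynomial.eval_finset_sum, Polynomial.eval_mul, Polynomial.eval_C,
            Polynomial.eval_pow, Polynomial.eval_X]
          rw [← hid]
          refine Finset.sum_congr rfl fun γ _ => ?_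
          rw [mul_comm (c γ), he]
          congr 1
          rw [← Finset.prod_pow_eq_pow_sum]
          refine Finset.prod_congr rfl fun i _ => ?_
          rw [← pow_mul, mul_comm]
        have hP0 : P = 0 := by
          refine Polynomial.eq_zero_of_infinite_isRoot P ?_
          exact Set.Infinite.mono (fun t ht => hroot t ht) (Set.Ioi_infinite 0)
        have hcoeff : P.coeff (e β) = c β := by
          rw [hP, Polynomial.finset_sum_coeff]
          rw [Finset.sum_eq_single β]
          · simp [Polynomial.coeff_C_mul, Polynomial.coeff_X_pow]
          · intro γ hγ hne
            have hne' : e γ ≠ e β := fun h =>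
              hne (digits_inj d N γ β (hlt γ hγ) (hlt β hβ) h)
            simp only [Polynomial.coeff_C_mul, Polynomial.coeff_X_pow, mul_ite, mul_one,
              mul_zero, ite_eq_right_iff]
            exact fun h => absurd h.symm hne'
          · intro h; exact absurd hβ h
        rw [hP0] at hcoeff; simpa using hcoeff.symm
      exact sub_eq_zero.mp hsub
    · have hfil : J.filter (fun p => p.2 = β) = ∅ := by
        refine Finset.filter_eq_empty_iff.mpr fun p hp => ?_
        exact fun h => hβ (h ▸ hmem p hp)
      simp [hfil]
  · intro H s hs
    rw [regroup s]
    refine Finset.sum_eq_zero fun β _ => ?_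
    rw [hc]
    simp [sub_eq_zero.mpr (H β)]
end
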